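/- Let K ⊂ ℝⁿ be a 0-symmetric convex body (compact, convex, nonempty interior, K = −K), U a linear subspace of ℝⁿ, and K° its polar body. Then R(K, Φ_U(K)) = R(K°, Φ_U(K°)), where R denotes the circumradius and Φ_U the reflection across U. -/

import Mathlib

open Pointwise RealInnerProductSpace

variable {n : ℕ}
local notation "E" => EuclideanSpace ℝ (Fin n)

def pol (K : Set (EuclideanSpace ℝ (Fin n))) : Set (EuclideanSpace ℝ (Fin n)) :=
  {a | ∀ x ∈ K, ⟪a, x⟫ ≤ 1}

lemma pol_mono {K L : Set (EuclideanSpace ℝ (Fin n))} (h : K ⊆ L) : pol L ⊆ pol K :=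
  fun a ha x hx => ha x (h hx)

lemma refl_image_smul (U : Submodule ℝ (EuclideanSpace ℝ (Fin n))) (t : ℝ)
    (S : Set (EuclideanSpace ℝ (Fin n))) :
    (U.reflection) '' (t • S) = t • (U.reflection) '' S := by
  ext y
  simp only [Set.mem_image, Set.mem_smul_set]
  constructor
  · rintro ⟨x, ⟨s, hs, rfl⟩, rfl⟩
    exact ⟨U.reflection s, ⟨s, hs, rfl⟩, ((U.reflection).map_smul t s).symm⟩
  · rintro ⟨x, ⟨s, hs, rfl⟩, rfl⟩
    exact ⟨t • s, ⟨s, hs, rfl⟩, (U.reflection).map_smul t s⟩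

lemma refl_image_image (U : Submodule ℝ (EuclideanSpace ℝ (Fin n)))
    (S : Set (EuclideanSpace ℝ (Fin n))) :
    (U.reflection) '' ((U.reflection) '' S) = S := by
  rw [← Set.image_comp]
  simp [Function.comp_def, Submodule.reflection_reflection]

lemma pol_refl (U : Submodule ℝ (EuclideanSpace ℝ (Fin n)))
    (S : Set (EuclideanSpace ℝ (Fin n))) :
    pol ((U.reflection) '' S) = (U.reflection) '' pol S := by
  ext a
  constructor
  · intro ha
    refine ⟨U.reflection a, fun x hx => ?_, Submodule.reflection_reflection U a⟩
    rw [← Submodule.reflection_reflection U x, (U.reflection).inner_map_map]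
    exact ha _ ⟨x, hx, rfl⟩
  · rintro ⟨b, hb, rfl⟩ y ⟨x, hx, rfl⟩
    rw [(U.reflection).inner_map_map]
    exact hb x hx

lemma pol_smul {t : ℝ} (ht : 0 < t) (S : Set (EuclideanSpace ℝ (Fin n))) :
    pol (t • S) = t⁻¹ • pol S := by
  ext a
  constructor
  · intro ha
    refine ⟨t • a, fun x hx => ?_, by simp [smul_smul, inv_mul_cancel₀ ht.ne']⟩
    have := ha (t • x) ⟨x, hx, rfl⟩
    rwa [real_inner_smul_right, ← real_inner_smul_left] at this
  · rintro ⟨b, hb, rfl⟩ y ⟨x, hx, rfl⟩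
    rw [real_inner_smul_left, real_inner_smul_right, ← mul_assoc,
      inv_mul_cancel₀ ht.ne', one_mul]
    exact hb x hx

lemma bipolar {K : Set (EuclideanSpace ℝ (Fin n))} (hc : Convex ℝ K) (hcl : IsClosed K)
    (h0 : (0 : EuclideanSpace ℝ (Fin n)) ∈ K) : pol (pol K) = K := by
  apply Set.Subset.antisymm
  · intro y hy
    by_contra hyK
    obtain ⟨f, u, hfK, hfy⟩ := geometric_hahn_banach_closed_point hc hcl hyK
    have hu : 0 < u := by simpa using hfK 0 h0
    set v := (InnerProductSpace.toDual ℝ _).symm f with hv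
    have hvf : ∀ x, ⟪v, x⟫ = f x := fun x => InnerProductSpace.toDual_symm_apply
    have hmem : u⁻¹ • v ∈ pol K := by
      intro x hx
      rw [real_inner_smul_left, hvf]
      rw [inv_mul_le_one₀ hu]
      · exact (hfK x hx).le
    have := hy _ hmem
    rw [real_inner_comm, real_inner_smul_left, hvf] at this
    have : f y ≤ u := by
      rw [inv_mul_le_one₀ hu] at this
      linarith [this]
    linarith
  · intro x hx a ha
    rw [real_inner_comm]
    exact ha x hx

lemma smul_smul_set' (t s : ℝ) (X : Set (EuclideanSpace ℝ (Fin n))) :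
    t • s • X = (t * s) • X := by
  ext x
  simp only [Set.mem_smul_set]
  constructor
  · rintro ⟨y, ⟨z, hz, rfl⟩, rfl⟩; exact ⟨z, hz, (smul_smul t s z).symm⟩
  · rintro ⟨z, hz, rfl⟩; exact ⟨s • z, ⟨z, hz, rfl⟩, smul_smul t s z⟩

lemma smul_cancel_set {t : ℝ} (ht : t ≠ 0) (X : Set (EuclideanSpace ℝ (Fin n))) :
    t • t⁻¹ • X = X := by
  rw [smul_smul_set', mul_inv_cancel₀ ht, one_smul]

lemma refl_image_neg (U : Submodule ℝ (EuclideanSpace ℝ (Fin n)))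
    (S : Set (EuclideanSpace ℝ (Fin n))) :
    (U.reflection) '' (-S) = -((U.reflection) '' S) := by
  ext y
  simp only [Set.mem_image, Set.mem_neg]
  constructor
  · rintro ⟨x, hx, rfl⟩; exact ⟨-x, hx, by simp⟩
  · rintro ⟨x, hx, h⟩
    exact ⟨-x, by simpa using hx, by rw [map_neg, h, neg_neg]⟩

lemma step {t : ℝ} (ht : 0 < t) (U : Submodule ℝ (EuclideanSpace ℝ (Fin n)))
    {A : Set (EuclideanSpace ℝ (Fin n))} (h : t⁻¹ • (U.reflection) '' A ⊆ A) :
    A ⊆ t • (U.reflection) '' A := by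
  have h2 : (U.reflection) '' A ⊆ t • A := by
    have := Set.smul_set_mono (a := t) h
    rwa [smul_cancel_set ht.ne'] at this
  have h3 := Set.image_mono (f := U.reflection) h2
  rwa [refl_image_image, refl_image_smul] at h3

lemma translate_iff {K C : Set (EuclideanSpace ℝ (Fin n))} (hKs : K = -K) (hCs : C = -C)
    (hCc : Convex ℝ C) : (∃ z, K ⊆ {z} + C) ↔ K ⊆ C := by
  constructor
  · rintro ⟨z, h⟩ x hx
    have hx1 := h hx
    rw [Set.singleton_add] at hx1
    obtain ⟨c₁, hc₁, hc₁e⟩ := hx1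
    have hnx : -x ∈ K := by rw [hKs]; exact Set.neg_mem_neg.mpr hx
    have hx2 := h hnx
    rw [Set.singleton_add] at hx2
    obtain ⟨c₂, hc₂, hc₂e⟩ := hx2
    have hnc₂ : -c₂ ∈ C := by rw [hCs]; exact Set.neg_mem_neg.mpr hc₂
    have := hCc hc₁ hnc₂ (by norm_num : (0:ℝ) ≤ 1/2) (by norm_num : (0:ℝ) ≤ 1/2) (by norm_num)
    have hx' : (1/2 : ℝ) • c₁ + (1/2 : ℝ) • (-c₂) = x := by
      have e1 : c₁ = x - z := by rw [← hc₁e]; module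
      have e2 : -c₂ = x + z := by
        have h2 : z + c₂ = -x := hc₂e
        have h3 : -(z + c₂) = x := by rw [h2, neg_neg]
        rw [← h3]; module
      rw [e1, e2]
      module
    rwa [hx'] at this
  · intro h
    exact ⟨0, by simpa [Set.singleton_add] using h⟩

/-- The circumradius of `K` with respect to `C`: the smallest `t > 0` such that a
translate of `t • C` contains `K`. -/
noncomputable def circumradius {n : ℕ} (K C : Set (EuclideanSpace ℝ (Fin n))) : ℝ :=
  sInf {t : ℝ | 0 < t ∧ ∃ z : EuclideanSpace ℝ (Fin n), K ⊆ {z} + t • C}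

theorem stmt_12 (n : ℕ) (K : Set (EuclideanSpace ℝ (Fin n)))
    (hK : IsCompact K) (hKc : Convex ℝ K) (hKint : (interior K).Nonempty)
    (hsymm : K = -K) (U : Submodule ℝ (EuclideanSpace ℝ (Fin n))) :
    circumradius K ((U.reflection) '' K) =
      circumradius {a : EuclideanSpace ℝ (Fin n) | ∀ x ∈ K, ⟪a, x⟫ ≤ 1}
        ((U.reflection) '' {a : EuclideanSpace ℝ (Fin n) | ∀ x ∈ K, ⟪a, x⟫ ≤ 1}) := by
  show circumradius K ((U.reflection) '' K) = circumradius (pol K) ((U.reflection) '' pol K)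
  -- basic facts
  obtain ⟨x₀, hx₀⟩ := hKint
  have hx₀K : x₀ ∈ K := interior_subset hx₀
  have hnx₀K : -x₀ ∈ K := by rw [hsymm]; exact Set.neg_mem_neg.mpr hx₀K
  have h0K : (0 : EuclideanSpace ℝ (Fin n)) ∈ K := by
    have h := hKc hx₀K hnx₀K (by norm_num : (0:ℝ) ≤ 1/2) (by norm_num : (0:ℝ) ≤ 1/2)
      (by norm_num)
    have e : (1/2 : ℝ) • x₀ + (1/2 : ℝ) • (-x₀) = 0 := by module
    rwa [e] at h
  have hbi : pol (pol K) = K := bipolar hKc hK.isClosed h0K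
  have hPs : pol K = -pol K := by
    ext a
    simp only [Set.mem_neg]
    constructor
    · intro ha x hx
      have hnx : -x ∈ K := by rw [hsymm]; exact Set.neg_mem_neg.mpr hx
      have h := ha (-x) hnx
      rwa [inner_neg_left, ← inner_neg_right]
    · intro ha x hx
      have hnx : -x ∈ K := by rw [hsymm]; exact Set.neg_mem_neg.mpr hx
      have h := ha (-x) hnx
      rwa [inner_neg_neg] at h
  have hPc : Convex ℝ (pol K) := by
    intro a ha b hb α β hα hβ hab
    have ha' : ∀ y ∈ K, ⟪a, y⟫ ≤ 1 := ha
    have hb' : ∀ y ∈ K, ⟪b, y⟫ ≤ 1 := hb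
    intro x hx
    have hax := ha' x hx
    have hbx := hb' x hx
    show ⟪α • a + β • b, x⟫ ≤ 1
    rw [inner_add_left, real_inner_smul_left, real_inner_smul_left]
    calc α * ⟪a, x⟫ + β * ⟪b, x⟫ ≤ α * 1 + β * 1 :=
          add_le_add (mul_le_mul_of_nonneg_left hax hα) (mul_le_mul_of_nonneg_left hbx hβ)
      _ = 1 := by rw [mul_one, mul_one]; exact hab
  have hrKc : Convex ℝ ((U.reflection) '' K) :=
    by have := hKc.linear_image ((U.reflection).toLinearEquiv.toLinearMap : _ →ₗ[ℝ] _); exact this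
  have hrPc : Convex ℝ ((U.reflection) '' pol K) :=
    by have := hPc.linear_image ((U.reflection).toLinearEquiv.toLinearMap : _ →ₗ[ℝ] _); exact this
  -- the two defining sets coincide
  unfold circumradius
  congr 1
  ext t
  simp only [Set.mem_setOf_eq]
  refine and_congr_right fun ht => ?_
  have hCs : t • (U.reflection) '' K = -(t • (U.reflection) '' K) := by
    conv_lhs => rw [hsymm]
    rw [refl_image_neg, Set.smul_set_neg]
  have hDs : t • (U.reflection) '' pol K = -(t • (U.reflection) '' pol K) := by
    conv_lhs => rw [hPs]
    rw [refl_image_neg, Set.smul_set_neg]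
  rw [translate_iff hsymm hCs (hrKc.smul t),
    translate_iff hPs hDs (hrPc.smul t)]
  constructor
  · intro h
    apply step ht U
    have h1 := pol_mono h
    rwa [pol_smul ht, pol_refl] at h1
  · intro h
    apply step ht U
    have h1 := pol_mono h
    rw [pol_smul ht, pol_refl, hbi] at h1
    exact h1
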